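/- Let Σ be a positive semidefinite d×d matrix with eigenvalues λ₁ ≥ λ₂ ≥ … ≥ λ_d ≥ 0 and λ₁ > 0. For every β with 0 < β ≤ γ (where γ ∈ (0,1) and λ_{k+1} ≤ (1−γ)λ_k for some k ∈ [d−1]), there exists p ∈ [k] such that λ_p ≥ (1−β)·λ₁ and λ_{p+1} ≤ (1 − β/k)·λ_p. -/
import Mathlib


/-- Let `lam 1 ≥ lam 2 ≥ … ≥ lam d ≥ 0` be the ordered eigenvalues of a PSD
matrix with `lam 1 > 0`, and suppose `lam (k+1) ≤ (1−γ)·lam k` for some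
`k ∈ [d−1]` and `γ ∈ (0,1)`. Then for every `β` with `0 < β ≤ γ` there exists
`p ∈ [k]` with `lam p ≥ (1−β)·lam 1` and `lam (p+1) ≤ (1 − β/k)·lam p`. -/
theorem exists_eigengap (d k : ℕ) (hk1 : 1 ≤ k) (hkd : k + 1 ≤ d)
    (lam : ℕ → ℝ)
    (hdec : ∀ i, 1 ≤ i → i < d → lam (i + 1) ≤ lam i)
    (hnonneg : ∀ i, 1 ≤ i → i ≤ d → 0 ≤ lam i)
    (hpos : 0 < lam 1)
    (γ : ℝ) (hγ : γ ∈ Set.Ioo (0 : ℝ) 1)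
    (hgap : lam (k + 1) ≤ (1 - γ) * lam k)
    (β : ℝ) (hβ0 : 0 < β) (hβγ : β ≤ γ) :
    ∃ p, 1 ≤ p ∧ p ≤ k ∧ (1 - β) * lam 1 ≤ lam p ∧
      lam (p + 1) ≤ (1 - β / k) * lam p := by
  by_contra hcon
  push_neg at hcon
  have hkR : (1 : ℝ) ≤ (k : ℝ) := by exact_mod_cast hk1
  have hkpos : (0 : ℝ) < (k : ℝ) := by linarith
  have hβ1 : β < 1 := lt_of_le_of_lt hβγ hγ.2
  have hβk0 : 0 < β / k := div_pos hβ0 hkpos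
  have hcancel : (k : ℝ) * (β / k) = β := mul_div_cancel₀ β hkpos.ne'
  have hβk : β / k ≤ β := by nlinarith
  have key : ∀ p, 1 ≤ p → p ≤ k →
      (1 - ((p : ℝ) - 1) * (β / k)) * lam 1 ≤ lam p := by
    intro p
    induction p with
    | zero => intro h; exact absurd h (by omega)
    | succ n ih =>
      intro _ hle
      rcases Nat.eq_zero_or_pos n with h0 | hn
      · subst h0; norm_num
      · have hn1 : 1 ≤ n := hn
        have hnk : n ≤ k := by omega
        have ihn := ih hn1 hnk
        have hnR : (1 : ℝ) ≤ (n : ℝ) := by exact_mod_cast hn1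
        have hnkR : (n : ℝ) ≤ (k : ℝ) := by exact_mod_cast hnk
        have h1 : ((n : ℝ) - 1) * (β / k) ≤ β := by
          calc ((n : ℝ) - 1) * (β / k) ≤ (k : ℝ) * (β / k) :=
                mul_le_mul_of_nonneg_right (by linarith) hβk0.le
            _ = β := hcancel
        have hlamn : (1 - β) * lam 1 ≤ lam n := by
          nlinarith [mul_nonneg (sub_nonneg.2 h1) hpos.le]
        have hstep := hcon n hn1 hnk hlamn
        have hfac : (0 : ℝ) ≤ 1 - β / k := by linarith
        have hmul : (1 - β / k) * ((1 - ((n : ℝ) - 1) * (β / k)) * lam 1)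
            ≤ (1 - β / k) * lam n :=
          mul_le_mul_of_nonneg_left ihn hfac
        have h2 : 0 ≤ ((n : ℝ) - 1) * (β / k) * (β / k) * lam 1 :=
          mul_nonneg (mul_nonneg (mul_nonneg (by linarith) hβk0.le) hβk0.le)
            hpos.le
        push_cast
        set t := β / (k : ℝ) with ht
        nlinarith [h2, hmul, hstep]
  have hkk := key k hk1 le_rfl
  have h1 : ((k : ℝ) - 1) * (β / k) ≤ β := by
    calc ((k : ℝ) - 1) * (β / k) ≤ (k : ℝ) * (β / k) :=
          mul_le_mul_of_nonneg_right (by linarith) hβk0.le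
      _ = β := hcancel
  have hlamk : (1 - β) * lam 1 ≤ lam k := by
    nlinarith [mul_nonneg (sub_nonneg.2 h1) hpos.le]
  have hlamkpos : 0 < lam k := by nlinarith
  have hstep := hcon k hk1 le_rfl hlamk
  have hge : 0 ≤ (γ - β / k) * lam k :=
    mul_nonneg (by linarith) hlamkpos.le
  nlinarith [hge, hstep, hgap]
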